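/- Let $n \geq 2$. The $n$-dimensional Lebesgue measure of the set $\{x \in [0,1]^n : 1 \leq x_1 + \cdots + x_n \leq 2\}$ equals $(2^n - n - 1)/n!$. Equivalently, the normalized volume (Euclidean volume times $n!$) of the hypersimplex $\Delta_{n,2}$ equals the Eulerian number $2^n - n - 1$. -/

import Mathlib

open MeasureTheory Set Filter
open scoped ENNReal

noncomputable def Fvol (n : ℕ) (t : ℝ) : ℝ≥0∞ :=
  volume {x : Fin n → ℝ | (∀ i, 0 ≤ x i ∧ x i ≤ 1) ∧ ∑ i, x i ≤ t}

lemma measS (n : ℕ) (t : ℝ) :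
    MeasurableSet {x : Fin n → ℝ | (∀ i, 0 ≤ x i ∧ x i ≤ 1) ∧ ∑ i, x i ≤ t} := by
  have h1 : MeasurableSet {x : Fin n → ℝ | ∀ i, 0 ≤ x i ∧ x i ≤ 1} := by
    rw [Set.setOf_forall]
    exact MeasurableSet.iInter fun i => (measurable_pi_apply i) measurableSet_Icc
  have h2 : Measurable fun x : Fin n → ℝ => ∑ i, x i :=
    Finset.measurable_sum _ fun i _ => measurable_pi_apply i
  exact h1.inter (h2 measurableSet_Iic)

lemma hasDerivAt_maxpow (n : ℕ) (hn : 1 ≤ n) (x : ℝ) :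
    HasDerivAt (fun y : ℝ => max y 0 ^ (n + 1)) ((n + 1) * max x 0 ^ n) x := by
  rcases lt_trichotomy x 0 with hx | rfl | hx
  · have he : (fun y : ℝ => max y 0 ^ (n + 1)) =ᶠ[nhds x] fun _ => (0 : ℝ) := by
      filter_upwards [Iio_mem_nhds hx] with y (hy : y < 0)
      simp [max_eq_right hy.le, zero_pow (by omega : n + 1 ≠ 0)]
    have h0 : HasDerivAt (fun _ : ℝ => (0 : ℝ)) 0 x := hasDerivAt_const x 0
    have h1 := h0.congr_of_eventuallyEq he
    refine h1.congr_deriv ?_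
    simp [max_eq_right hx.le, zero_pow (by omega : n ≠ 0)]
  · rw [hasDerivAt_iff_tendsto_slope]
    have hb : ∀ y : ℝ, ‖slope (fun y : ℝ => max y 0 ^ (n + 1)) 0 y‖ ≤ |y| ^ n := by
      intro y
      rcases lt_trichotomy y 0 with hy | rfl | hy
      · have : slope (fun y : ℝ => max y 0 ^ (n + 1)) 0 y = 0 := by
          rw [slope_def_field]
          simp [max_eq_right hy.le, zero_pow (by omega : n + 1 ≠ 0)]
        rw [this, norm_zero]; positivity
      · simp [slope_def_field]
      · have : slope (fun y : ℝ => max y 0 ^ (n + 1)) 0 y = y ^ n := by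
          rw [slope_def_field]
          rw [max_eq_left hy.le, max_eq_right (le_refl (0:ℝ)),
            zero_pow (by omega : n + 1 ≠ 0), sub_zero, sub_zero, pow_succ,
            mul_div_assoc, div_self hy.ne', mul_one]
        rw [this, Real.norm_eq_abs, abs_pow]
    have hg : Tendsto (fun y : ℝ => |y| ^ n) (nhdsWithin 0 {(0:ℝ)}ᶜ) (nhds 0) := by
      have h2 : Tendsto (fun y : ℝ => |y| ^ n) (nhds 0) (nhds (|(0:ℝ)| ^ n)) :=
        ((continuous_abs.pow n).tendsto 0)
      simpa [zero_pow (by omega : n ≠ 0)] using h2.mono_left nhdsWithin_le_nhds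
    have h3 := squeeze_zero_norm hb hg
    convert h3 using 2
    simp [zero_pow (by omega : n ≠ 0)]
  · have he : (fun y : ℝ => max y 0 ^ (n + 1)) =ᶠ[nhds x] fun y => y ^ (n + 1) := by
      filter_upwards [Ioi_mem_nhds hx] with y (hy : 0 < y)
      simp [max_eq_left hy.le]
    have h1 := (hasDerivAt_pow (n + 1) x).congr_of_eventuallyEq he
    refine h1.congr_deriv ?_
    simp [max_eq_left hx.le]

lemma integral_maxpow (n : ℕ) (hn : 1 ≤ n) (c : ℝ) :
    ∫ a in (0:ℝ)..1, max (c - a) 0 ^ n =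
      (max c 0 ^ (n + 1) - max (c - 1) 0 ^ (n + 1)) / (n + 1) := by
  obtain ⟨m, rfl⟩ : ∃ m, n = m + 1 := ⟨n - 1, by omega⟩
  have key : ∀ a : ℝ, HasDerivAt (fun a : ℝ => max (c - a) 0 ^ (m + 1 + 1) / (-((m : ℝ) + 1 + 1)))
      (max (c - a) 0 ^ (m + 1)) a := by
    intro a
    have h1 := hasDerivAt_maxpow (m + 1) (by omega) (c - a)
    have h2 : HasDerivAt (fun a : ℝ => c - a) (-1) a := (hasDerivAt_id a).const_sub c
    have h3 := h1.comp a h2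
    have h4 := h3.div_const (-(m + 1 + 1) : ℝ)
    have hne : ((m : ℝ) + 1 + 1) ≠ 0 := by positivity
    have h5 : ((m + 1 : ℕ) + 1 : ℝ) * (max (c - a) 0) ^ (m + 1) * (-1) / (-((m : ℝ) + 1 + 1))
        = max (c - a) 0 ^ (m + 1) := by
      push_cast
      rw [mul_neg_one, neg_div_neg_eq, mul_div_cancel_left₀ _ hne]
    rw [h5] at h4
    exact h4
  rw [intervalIntegral.integral_eq_sub_of_hasDerivAt (fun a _ => key a)
    (Continuous.intervalIntegrable (by fun_prop) _ _)]
  have hne : ((m : ℝ) + 1 + 1) ≠ 0 := by positivity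
  push_cast
  simp only [sub_zero]
  rw [div_sub_div_same, div_neg, ← neg_div, neg_sub]

lemma key_nonneg (n : ℕ) (hn : 1 ≤ n) (t : ℝ) (ht : t ≤ 2) :
    0 ≤ max t 0 ^ n - n * max (t - 1) 0 ^ n := by
  rcases le_or_gt t 1 with h | h
  · rw [max_eq_right (by linarith : t - 1 ≤ 0), zero_pow (by omega : n ≠ 0)]
    simp only [mul_zero, sub_zero]
    positivity
  · rw [max_eq_left (by linarith : (0:ℝ) ≤ t), max_eq_left (by linarith : (0:ℝ) ≤ t - 1)]
    have h1 : (t - 1) ^ n ≤ (t - 1) ^ 1 :=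
      pow_le_pow_of_le_one (by linarith) (by linarith) hn
    have h2 : 1 + (n : ℝ) * (t - 1) ≤ (1 + (t - 1)) ^ n :=
      one_add_mul_le_pow (by linarith) n
    have h3 : (n : ℝ) * (t - 1) ^ n ≤ n * (t - 1) := by
      have := mul_le_mul_of_nonneg_left h1 (by positivity : (0:ℝ) ≤ (n:ℝ))
      simpa using this
    have h4 : (1 : ℝ) + (t - 1) = t := by ring
    rw [h4] at h2
    linarith

lemma Fvol_base (t : ℝ) (ht : t ≤ 2) :
    Fvol 1 t = ENNReal.ofReal ((max t 0 ^ 1 - 1 * max (t - 1) 0 ^ 1) / (Nat.factorial 1)) := by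
  have hpre : {x : Fin 1 → ℝ | (∀ i, 0 ≤ x i ∧ x i ≤ 1) ∧ ∑ i, x i ≤ t}
      = (MeasurableEquiv.funUnique (Fin 1) ℝ) ⁻¹' (Icc 0 1 ∩ Iic t) := by
    ext x
    simp [MeasurableEquiv.funUnique, Fin.forall_fin_one, mem_Icc]
  rw [Fvol, hpre]
  erw [(volume_preserving_funUnique (Fin 1) ℝ).measure_preimage
    ((measurableSet_Icc.inter measurableSet_Iic).nullMeasurableSet)]
  have hii : Icc (0:ℝ) 1 ∩ Iic t = Icc 0 (min 1 t) := by
    ext x; simp [mem_Icc, le_min_iff, and_assoc]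
  rw [hii, Real.volume_Icc]
  rcases le_or_gt t 0 with h | h
  · rw [ENNReal.ofReal_eq_zero.2 (by rw [sub_zero]; exact le_trans (min_le_right 1 t) h),
      max_eq_right h, max_eq_right (by linarith : t - 1 ≤ 0)]
    norm_num
  · rcases le_or_gt t 1 with h1 | h1
    · rw [max_eq_left h.le, max_eq_right (by linarith : t - 1 ≤ 0), min_eq_right h1]
      norm_num
    · rw [max_eq_left (by linarith : (0:ℝ) ≤ t), max_eq_left (by linarith : (0:ℝ) ≤ t - 1),
        min_eq_left h1.le]
      congr 1
      simp [Nat.factorial]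

lemma Fvol_formula (n : ℕ) (hn : 1 ≤ n) : ∀ t : ℝ, t ≤ 2 →
    Fvol n t = ENNReal.ofReal ((max t 0 ^ n - n * max (t - 1) 0 ^ n) / n.factorial) := by
  induction n, hn using Nat.le_induction with
  | base =>
    intro t ht
    simpa using Fvol_base t ht
  | succ n hn ih =>
    intro t ht
    set T : Set (ℝ × (Fin n → ℝ)) :=
      {p | (0 ≤ p.1 ∧ p.1 ≤ 1) ∧ (∀ i, 0 ≤ p.2 i ∧ p.2 i ≤ 1) ∧ p.1 + ∑ i, p.2 i ≤ t} with hTdef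
    have hT : MeasurableSet T := by
      have h1 : MeasurableSet {p : ℝ × (Fin n → ℝ) | 0 ≤ p.1 ∧ p.1 ≤ 1} := by
        have : MeasurableSet ((fun p : ℝ × (Fin n → ℝ) => p.1) ⁻¹' Icc (0:ℝ) 1) :=
          measurable_fst measurableSet_Icc
        simpa [mem_Icc, preimage] using this
      have h2 : MeasurableSet {p : ℝ × (Fin n → ℝ) | ∀ i, 0 ≤ p.2 i ∧ p.2 i ≤ 1} := by
        rw [Set.setOf_forall]
        exact MeasurableSet.iInter fun i =>
          ((measurable_pi_apply i).comp measurable_snd) measurableSet_Icc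
      have h3 : MeasurableSet {p : ℝ × (Fin n → ℝ) | p.1 + ∑ i, p.2 i ≤ t} := by
        have hm : Measurable fun p : ℝ × (Fin n → ℝ) => p.1 + ∑ i, p.2 i :=
          measurable_fst.add ((Finset.measurable_sum _ fun i _ =>
            measurable_pi_apply i).comp measurable_snd)
        exact hm measurableSet_Iic
      exact h1.inter (h2.inter h3)
    have hpre : {x : Fin (n+1) → ℝ | (∀ i, 0 ≤ x i ∧ x i ≤ 1) ∧ ∑ i, x i ≤ t}
        = (MeasurableEquiv.piFinSuccAbove (fun _ : Fin (n+1) => ℝ) 0) ⁻¹' T := by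
      ext x
      simp only [mem_setOf_eq, mem_preimage, MeasurableEquiv.piFinSuccAbove_apply, hTdef,
        Fin.forall_fin_succ, Fin.sum_univ_succ, Fin.succAbove_zero]
      tauto
    rw [Fvol, hpre,
      (volume_preserving_piFinSuccAbove (fun _ : Fin (n+1) => ℝ) 0).measure_preimage
        hT.nullMeasurableSet,
      Measure.volume_eq_prod, Measure.prod_apply hT]
    have hsec : ∀ a : ℝ, volume (Prod.mk a ⁻¹' T)
        = Set.indicator (Icc 0 1) (fun a => Fvol n (t - a)) a := by
      intro a
      by_cases ha : a ∈ Icc (0:ℝ) 1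
      · rw [Set.indicator_of_mem ha, Fvol]
        congr 1
        ext y
        simp only [mem_preimage, hTdef, mem_setOf_eq, mem_Icc] at *
        rw [le_sub_iff_add_le']
        tauto
      · rw [Set.indicator_of_notMem ha]
        convert measure_empty
        · ext y
          simp only [mem_preimage, hTdef, mem_setOf_eq, mem_Icc] at *
          tauto
        · infer_instance
    simp_rw [hsec]
    rw [lintegral_indicator measurableSet_Icc]
    have hcongr : ∀ᵐ a ∂(volume : Measure ℝ), a ∈ Icc (0:ℝ) 1 →
        Fvol n (t - a) = ENNReal.ofReal
          ((max (t - a) 0 ^ n - n * max (t - a - 1) 0 ^ n) / n.factorial) := by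
      refine ae_of_all _ fun a ha => ?_
      rw [ih (t - a) (by have := ha.1; linarith)]
    rw [setLIntegral_congr_fun_ae measurableSet_Icc hcongr]
    have hcont1 : Continuous fun a : ℝ => max (t - a) 0 ^ n :=
      (((continuous_const.sub continuous_id).max continuous_const).pow n)
    have hcont2 : Continuous fun a : ℝ => max (t - a - 1) 0 ^ n :=
      ((((continuous_const.sub continuous_id).sub continuous_const).max continuous_const).pow n)
    have hcont : Continuous fun a : ℝ =>
        (max (t - a) 0 ^ n - n * max (t - a - 1) 0 ^ n) / n.factorial :=
      (hcont1.sub (continuous_const.mul hcont2)).div_const _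
    have hInt : IntegrableOn (fun a : ℝ =>
        (max (t - a) 0 ^ n - n * max (t - a - 1) 0 ^ n) / n.factorial) (Icc 0 1) volume :=
      hcont.integrableOn_Icc
    have hNN : 0 ≤ᵐ[volume.restrict (Icc (0:ℝ) 1)] fun a : ℝ =>
        (max (t - a) 0 ^ n - n * max (t - a - 1) 0 ^ n) / n.factorial :=
      (ae_restrict_iff' measurableSet_Icc).2 (ae_of_all _ fun a ha =>
        div_nonneg (key_nonneg n hn (t - a) (by have := ha.1; linarith)) (by positivity))
    rw [← ofReal_integral_eq_lintegral_ofReal hInt hNN]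
    congr 1
    rw [integral_Icc_eq_integral_Ioc, ← intervalIntegral.integral_of_le (zero_le_one)]
    rw [intervalIntegral.integral_div]
    rw [intervalIntegral.integral_sub (g := fun a : ℝ => (n : ℝ) * max (t - a - 1) 0 ^ n)
      (hcont1.intervalIntegrable 0 1)
      ((continuous_const.mul hcont2).intervalIntegrable 0 1)]
    rw [intervalIntegral.integral_const_mul]
    simp_rw [show ∀ a : ℝ, t - a - 1 = t - 1 - a from fun a => by ring]
    rw [integral_maxpow n hn t, integral_maxpow n hn (t - 1),
      max_eq_right (by linarith : t - 1 - 1 ≤ 0), zero_pow (by omega : n + 1 ≠ 0),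
      Nat.factorial_succ]
    have hf : (0:ℝ) < n.factorial := by positivity
    have hn1 : ((n:ℝ) + 1) ≠ 0 := by positivity
    push_cast
    field_simp
    ring

lemma hyperplane_null (n : ℕ) (hn : 1 ≤ n) :
    volume {x : Fin n → ℝ | ∑ i, x i = 1} = 0 := by
  have hpos : 0 < n := hn
  let L : (Fin n → ℝ) →ₗ[ℝ] ℝ :=
    { toFun := fun x => ∑ i, x i
      map_add' := fun x y => by simp [Finset.sum_add_distrib]
      map_smul' := fun c x => by simp [Finset.mul_sum] }
  let i0 : Fin n := ⟨0, hpos⟩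
  let x0 : Fin n → ℝ := Pi.single i0 1
  have hL0 : L x0 = 1 := by simp [L, x0, Finset.sum_pi_single']
  have hker : LinearMap.ker L ≠ ⊤ := by
    intro h
    have hx : L x0 = 0 := LinearMap.mem_ker.1 (h ▸ Submodule.mem_top)
    rw [hL0] at hx; norm_num at hx
  have hset : {x : Fin n → ℝ | ∑ i, x i = 1}
      = (fun x => x + (-x0)) ⁻¹' (LinearMap.ker L : Set (Fin n → ℝ)) := by
    ext x
    simp only [mem_setOf_eq, mem_preimage, SetLike.mem_coe, LinearMap.mem_ker, map_add,
      map_neg, hL0, add_neg_eq_zero]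
    exact Iff.rfl
  rw [hset, measure_preimage_add_right volume (-x0) _]
  exact Measure.addHaar_submodule volume _ hker

/-- for `n ≥ 2`, the Lebesgue measure of the hypersimplex
`{x ∈ [0,1]ⁿ : 1 ≤ ∑ xᵢ ≤ 2}` is `(2ⁿ - n - 1)/n!`; equivalently the normalized
volume of `Δ_{n,2}` is the Eulerian number `2ⁿ - n - 1`. -/
theorem statement12 (n : ℕ) (hn : 2 ≤ n) :
    volume {x : Fin n → ℝ |
        (∀ i, 0 ≤ x i ∧ x i ≤ 1) ∧ 1 ≤ ∑ i, x i ∧ ∑ i, x i ≤ 2} =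
      ENNReal.ofReal ((2 ^ n - n - 1 : ℝ) / n.factorial) := by
  have hn1 : 1 ≤ n := by omega
  set A := {x : Fin n → ℝ | (∀ i, 0 ≤ x i ∧ x i ≤ 1) ∧ 1 ≤ ∑ i, x i ∧ ∑ i, x i ≤ 2} with hAdef
  set B1 := {x : Fin n → ℝ | (∀ i, 0 ≤ x i ∧ x i ≤ 1) ∧ ∑ i, x i ≤ 1} with hB1def
  have hunion : B1 ∪ A = {x : Fin n → ℝ | (∀ i, 0 ≤ x i ∧ x i ≤ 1) ∧ ∑ i, x i ≤ 2} := by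
    ext x
    simp only [mem_union, hAdef, hB1def, mem_setOf_eq]
    constructor
    · rintro (⟨h1, h2⟩ | ⟨h1, h2, h3⟩) <;> exact ⟨h1, by linarith⟩
    · rintro ⟨h1, h2⟩
      rcases le_total (∑ i, x i) 1 with h | h
      · exact Or.inl ⟨h1, h⟩
      · exact Or.inr ⟨h1, h, h2⟩
  have hinter : volume (B1 ∩ A) = 0 := by
    refine measure_mono_null ?_ (hyperplane_null n hn1)
    rintro x ⟨⟨_, h2⟩, _, h3, _⟩
    exact le_antisymm h2 h3
  have hA : MeasurableSet A := by
    have h1 : MeasurableSet {x : Fin n → ℝ | ∀ i, 0 ≤ x i ∧ x i ≤ 1} := by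
      rw [Set.setOf_forall]
      exact MeasurableSet.iInter fun i => (measurable_pi_apply i) measurableSet_Icc
    have h2 : Measurable fun x : Fin n → ℝ => ∑ i, x i :=
      Finset.measurable_sum _ fun i _ => measurable_pi_apply i
    exact h1.inter ((h2 measurableSet_Ici).inter (h2 measurableSet_Iic))
  have key := measure_union_add_inter (μ := volume) B1 hA
  rw [hunion, hinter, add_zero] at key
  have e2 : volume {x : Fin n → ℝ | (∀ i, 0 ≤ x i ∧ x i ≤ 1) ∧ ∑ i, x i ≤ 2} = Fvol n 2 := rfl
  have e1 : volume B1 = Fvol n 1 := rfl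
  have f2 : Fvol n 2 = ENNReal.ofReal (((2:ℝ) ^ n - n) / n.factorial) := by
    rw [Fvol_formula n hn1 2 le_rfl]
    norm_num
  have f1 : Fvol n 1 = ENNReal.ofReal ((1:ℝ) / n.factorial) := by
    rw [Fvol_formula n hn1 1 (by norm_num)]
    norm_num [zero_pow (by omega : n ≠ 0)]
  rw [e2, e1, f2, f1] at key
  have hfac : (0:ℝ) < n.factorial := by positivity
  have h2n : (n:ℝ) + 1 ≤ 2 ^ n := by
    have h := Nat.succ_le_of_lt (Nat.lt_two_pow_self (n := n))
    exact_mod_cast h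
  have hsplit : ((2:ℝ) ^ n - n) / n.factorial
      = 1 / n.factorial + ((2:ℝ) ^ n - n - 1) / n.factorial := by ring
  rw [hsplit, ENNReal.ofReal_add (by positivity) (div_nonneg (by linarith) hfac.le)] at key
  exact ((ENNReal.add_right_inj ENNReal.ofReal_ne_top).1 key).symm
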